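/- Let f : ℝⁿ → ℝⁿ be a map and T a linear isomorphism of ℝⁿ. If the image f([0,x]) equals the segment [0, T(x)] for every x ∈ ℝⁿ, then f = T. -/
import Mathlib


theorem eq_of_image_segment {n : ℕ}
    (f : EuclideanSpace ℝ (Fin n) → EuclideanSpace ℝ (Fin n))
    (T : EuclideanSpace ℝ (Fin n) ≃ₗ[ℝ] EuclideanSpace ℝ (Fin n))
    (hf : ∀ x : EuclideanSpace ℝ (Fin n),
      f '' segment ℝ (0 : EuclideanSpace ℝ (Fin n)) x
        = segment ℝ (0 : EuclideanSpace ℝ (Fin n)) (T x)) :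
    ∀ x, f x = T x := by
  intro x
  rcases eq_or_ne x 0 with rfl | hx
  · have h := hf 0
    rw [map_zero, segment_same] at h
    have : f 0 ∈ ({(0 : EuclideanSpace ℝ (Fin n))} : Set _) := by
      rw [← h]
      exact ⟨0, rfl, rfl⟩
    simpa [map_zero] using this.trans (map_zero T.toLinearMap).symm
  · have hTx : T x ≠ 0 := fun h => hx (by simpa using T.injective (by simpa using h))
    have hmem : T x ∈ f '' segment ℝ 0 x := by
      rw [hf x]; exact right_mem_segment ℝ 0 (T x)
    obtain ⟨y, hy, hfy⟩ := hmem
    obtain ⟨a, b, ha, hb, hab, hy'⟩ := hy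
    have hyb : y = b • x := by rw [← hy']; simp
    have hb1 : b ≤ 1 := by linarith
    have hfymem : f y ∈ segment ℝ (0 : EuclideanSpace ℝ (Fin n)) (T y) := by
      rw [← hf y]
      exact ⟨y, right_mem_segment ℝ 0 y, rfl⟩
    rw [hfy, hyb, map_smul] at hfymem
    obtain ⟨c, d, hc, hd, hcd, heq⟩ := hfymem
    have heq' : (d * b) • T x = T x := by
      rw [← smul_smul]; simpa using heq
    have hdb : d * b = 1 := by
      by_contra hne
      have h0 : (d * b - 1) • T x = 0 := by
        rw [sub_smul, heq', one_smul, sub_self]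
      rcases smul_eq_zero.mp h0 with h | h
      · exact hne (sub_eq_zero.mp h)
      · exact hTx h
    have hd1 : d ≤ 1 := by linarith
    have hb1' : b = 1 := by nlinarith
    rw [hb1', one_smul] at hyb
    rw [← hfy, hyb]
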